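/- Let φ(t) = 1 - e^t + e^{2t} + e^{3t}, let A be a finite set, let λ : A → ℝ with λ_α > 0 for all α and ∑ λ_α = 1, and let s : A → ℝ≥0. Then ∏_{α∈A} φ(s_α)^{λ_α} ≥ φ(∑_{α∈A} λ_α s_α). -/

import Mathlib

open Real Set

noncomputable def ph (t : ℝ) : ℝ := 1 - Real.exp t + Real.exp (2*t) + Real.exp (3*t)
noncomputable def ph1 (t : ℝ) : ℝ := -Real.exp t + 2*Real.exp (2*t) + 3*Real.exp (3*t)
noncomputable def ph2 (t : ℝ) : ℝ := -Real.exp t + 4*Real.exp (2*t) + 9*Real.exp (3*t)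

lemma ph_pos (t : ℝ) : 0 < ph t := by
  have h := Real.exp_pos t
  have h2 : Real.exp (2*t) = Real.exp t * Real.exp t := by
    rw [← Real.exp_add]; ring_nf
  have h3 : Real.exp (3*t) = Real.exp t * Real.exp t * Real.exp t := by
    rw [← Real.exp_add, ← Real.exp_add]; ring_nf
  unfold ph; rw [h2, h3]; nlinarith [sq_nonneg (Real.exp t - 1)]

lemma hasDerivAt_ph (t : ℝ) : HasDerivAt ph (ph1 t) t := by
  have h1 : HasDerivAt Real.exp (Real.exp t) t := Real.hasDerivAt_exp t
  have h2 : HasDerivAt (fun t => Real.exp (2*t)) (Real.exp (2*t) * 2) t :=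
    (Real.hasDerivAt_exp (2*t)).comp t (by simpa using (hasDerivAt_id t).const_mul 2)
  have h3 : HasDerivAt (fun t => Real.exp (3*t)) (Real.exp (3*t) * 3) t :=
    (Real.hasDerivAt_exp (3*t)).comp t (by simpa using (hasDerivAt_id t).const_mul 3)
  have := (((hasDerivAt_const t (1:ℝ)).sub h1).add h2).add h3
  exact this.congr_deriv (by unfold ph1; ring)

lemma hasDerivAt_ph1 (t : ℝ) : HasDerivAt ph1 (ph2 t) t := by
  have h1 : HasDerivAt Real.exp (Real.exp t) t := Real.hasDerivAt_exp t
  have h2 : HasDerivAt (fun t => Real.exp (2*t)) (Real.exp (2*t) * 2) t :=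
    (Real.hasDerivAt_exp (2*t)).comp t (by simpa using (hasDerivAt_id t).const_mul 2)
  have h3 : HasDerivAt (fun t => Real.exp (3*t)) (Real.exp (3*t) * 3) t :=
    (Real.hasDerivAt_exp (3*t)).comp t (by simpa using (hasDerivAt_id t).const_mul 3)
  have := (h1.neg.add (h2.const_mul 2)).add (h3.const_mul 3)
  exact this.congr_deriv (by unfold ph2; ring)

noncomputable def lph (t : ℝ) : ℝ := Real.log (ph t)

lemma hasDerivAt_lph (t : ℝ) : HasDerivAt lph (ph1 t / ph t) t :=
  (hasDerivAt_ph t).log (ph_pos t).ne'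

lemma deriv_lph : deriv lph = fun t => ph1 t / ph t := by
  funext t; exact (hasDerivAt_lph t).deriv

lemma hasDerivAt_deriv_lph (t : ℝ) :
    HasDerivAt (fun t => ph1 t / ph t) ((ph2 t * ph t - ph1 t * ph1 t) / (ph t)^2) t :=
  (hasDerivAt_ph1 t).div (hasDerivAt_ph t) (ph_pos t).ne'

lemma key (t : ℝ) (ht : 0 ≤ t) : 0 ≤ ph2 t * ph t - ph1 t * ph1 t := by
  have hx : 1 ≤ Real.exp t := by simpa using Real.exp_le_exp.2 ht
  set x := Real.exp t with hxdef
  have h2 : Real.exp (2*t) = x * x := by rw [← Real.exp_add]; ring_nf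
  have h3 : Real.exp (3*t) = x * x * x := by rw [← Real.exp_add, ← Real.exp_add]; ring_nf
  unfold ph ph1 ph2
  rw [h2, h3]
  nlinarith [sq_nonneg (x^2 - 2*x), sq_nonneg x, mul_pos (lt_of_lt_of_le one_pos hx) (lt_of_lt_of_le one_pos hx)]

lemma convex_lph : ConvexOn ℝ (Ici (0:ℝ)) lph := by
  have hdiff : Differentiable ℝ lph := fun t => (hasDerivAt_lph t).differentiableAt
  apply convexOn_of_deriv2_nonneg (convex_Ici 0) hdiff.continuous.continuousOn
    hdiff.differentiableOn
  · rw [deriv_lph]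
    exact fun t _ => ((hasDerivAt_deriv_lph t).differentiableAt).differentiableWithinAt
  · intro t ht
    rw [interior_Ici] at ht
    have : deriv^[2] lph t = (ph2 t * ph t - ph1 t * ph1 t) / (ph t)^2 := by
      rw [Function.iterate_succ, Function.iterate_one, Function.comp_apply, deriv_lph]
      exact (hasDerivAt_deriv_lph t).deriv
    rw [this]
    exact div_nonneg (key t ht.le) (sq_nonneg _)

theorem stmt_6 {ι : Type*} (A : Finset ι) (lam : ι → ℝ) (s : ι → ℝ)
    (hlam : ∀ α ∈ A, 0 < lam α) (hsum : ∑ α ∈ A, lam α = 1)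
    (hs : ∀ α ∈ A, 0 ≤ s α)
    (φ : ℝ → ℝ)
    (hφ : φ = fun t : ℝ => 1 - Real.exp t + Real.exp (2*t) + Real.exp (3*t)) :
    φ (∑ α ∈ A, lam α * s α) ≤ ∏ α ∈ A, φ (s α) ^ lam α := by
  have hφph : φ = ph := by rw [hφ]; rfl
  subst hφph
  have hJ := convex_lph.map_sum_le (t := A) (w := lam) (p := s)
    (fun α hα => (hlam α hα).le) hsum (fun α hα => hs α hα)
  simp only [smul_eq_mul] at hJ
  have h1 : ph (∑ α ∈ A, lam α * s α) = Real.exp (lph (∑ α ∈ A, lam α * s α)) := by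
    rw [lph, Real.exp_log (ph_pos _)]
  rw [h1]
  calc Real.exp (lph (∑ α ∈ A, lam α * s α)) ≤ Real.exp (∑ α ∈ A, lam α * lph (s α)) :=
        Real.exp_le_exp.2 hJ
    _ = ∏ α ∈ A, Real.exp (lam α * lph (s α)) := Real.exp_sum A _
    _ = ∏ α ∈ A, ph (s α) ^ lam α := by
        refine Finset.prod_congr rfl fun α hα => ?_
        rw [lph, Real.rpow_def_of_pos (ph_pos _), mul_comm]
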